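/- Let G be a symmetric 2×2 real matrix satisfying |2·G₀₁| > |G₀₀ + G₁₁|. Then there exists a real number φ such that, for the Lorentz boost matrix S(φ) with entries cosh φ, sinh φ, sinh φ, cosh φ, one has S(φ)ᵀ · J · S(φ) = J and the matrix G̃ = S(φ)ᵀ · G · S(φ) satisfies G̃₀₀ + G̃₁₁ = 0, i.e., G̃ has the form with entries (a, b; b, −a) for some real a and some real b ≠ 0. -/

import Mathlib

open Matrix

/-- The Minkowski metric matrix `diag(1, -1)`. -/
def Jmat : Matrix (Fin 2) (Fin 2) ℝ := !![1, 0; 0, -1]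

/-- The Lorentz boost matrix with parameter `φ`. -/
noncomputable def boost (φ : ℝ) : Matrix (Fin 2) (Fin 2) ℝ :=
  !![Real.cosh φ, Real.sinh φ; Real.sinh φ, Real.cosh φ]

/-- If `G` is a symmetric `2×2` real matrix with `|2 G₀₁| > |G₀₀ + G₁₁|`, then some Lorentz
boost preserves `J = diag(1,-1)` and brings `G` to the trace-free form `(a, b; b, -a)`
with `b ≠ 0`. -/
theorem simultaneous_reduction_subcase2 (G : Matrix (Fin 2) (Fin 2) ℝ) (hG : Gᵀ = G)
    (h : |2 * G 0 1| > |G 0 0 + G 1 1|) :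
    ∃ φ : ℝ, (boost φ)ᵀ * Jmat * boost φ = Jmat ∧
      ((boost φ)ᵀ * G * boost φ) 0 0 + ((boost φ)ᵀ * G * boost φ) 1 1 = 0 ∧
      ∃ a b : ℝ, b ≠ 0 ∧ (boost φ)ᵀ * G * boost φ = !![a, b; b, -a] := by
  obtain ⟨p, hp⟩ : ∃ x, G 0 0 = x := ⟨_, rfl⟩
  obtain ⟨q, hq'⟩ : ∃ x, G 0 1 = x := ⟨_, rfl⟩
  obtain ⟨r, hr⟩ : ∃ x, G 1 1 = x := ⟨_, rfl⟩
  have hq10 : G 1 0 = q := by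
    rw [← hq']; exact (congrFun (congrFun hG 1) 0).symm
  rw [hp, hq', hr] at h
  have hsq : (p + r)^2 < (2*q)^2 := by
    have := pow_lt_pow_left₀ h (abs_nonneg _) two_ne_zero
    rw [sq_abs, sq_abs] at this; exact this
  have hqne : q ≠ 0 := by
    intro h0
    rw [h0] at hsq
    nlinarith [sq_nonneg (p + r)]
  obtain ⟨t, ht⟩ : ∃ x, -(p + r) / (2 * q) = x := ⟨_, rfl⟩
  have h2q : (2:ℝ) * q ≠ 0 := by simpa using hqne
  have h2qsq : (0:ℝ) < (2*q)^2 := by positivity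
  have htq : t * (2 * q) = -(p + r) := by rw [← ht]; field_simp
  have ht1 : (0:ℝ) < 1 - t^2 := by
    rw [← ht, div_pow, sub_pos, div_lt_one h2qsq]
    nlinarith
  obtain ⟨u, hu⟩ : ∃ x, t / Real.sqrt (1 - t^2) = x := ⟨_, rfl⟩
  refine ⟨Real.arsinh u / 2, ?_⟩
  obtain ⟨c, hc⟩ : ∃ x, Real.cosh (Real.arsinh u / 2) = x := ⟨_, rfl⟩
  obtain ⟨s, hs⟩ : ∃ x, Real.sinh (Real.arsinh u / 2) = x := ⟨_, rfl⟩
  have hcs : c^2 - s^2 = 1 := by rw [← hc, ← hs]; exact Real.cosh_sq_sub_sinh_sq _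
  have hsqrtpos : 0 < Real.sqrt (1 - t^2) := Real.sqrt_pos.2 ht1
  have hsqrt_sq : Real.sqrt (1 - t^2) ^ 2 = 1 - t^2 := Real.sq_sqrt ht1.le
  have h1u : 1 + u^2 = (1 / Real.sqrt (1 - t^2))^2 := by
    rw [← hu, div_pow, div_pow, hsqrt_sq, one_pow]
    field_simp
    ring
  have hcosh2 : Real.cosh (Real.arsinh u) = 1 / Real.sqrt (1 - t^2) := by
    rw [Real.cosh_arsinh, h1u, Real.sqrt_sq (by positivity)]
  have hsinh_t : Real.sinh (Real.arsinh u) = t * Real.cosh (Real.arsinh u) := by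
    rw [Real.sinh_arsinh, hcosh2, ← hu]
    ring
  have hψ : Real.arsinh u = 2 * (Real.arsinh u / 2) := by ring
  rw [hψ, Real.sinh_two_mul, Real.cosh_two_mul, hc, hs] at hsinh_t
  -- hsinh_t : 2 * s * c = t * (c ^ 2 + s ^ 2)
  have hkey : 2 * s * c * (2 * q) = -(p + r) * (c^2 + s^2) := by
    linear_combination (2*q) * hsinh_t + (c^2 + s^2) * htq
  have hGexp : G = !![p, q; q, r] := by
    rw [Matrix.eta_fin_two G, hp, hq', hq10, hr]
  have hb : boost (Real.arsinh u / 2) = !![c, s; s, c] := by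
    rw [boost, hc, hs]
  have hbt : (boost (Real.arsinh u / 2))ᵀ = !![c, s; s, c] := by
    rw [hb]; ext i j; fin_cases i <;> fin_cases j <;> rfl
  have hprod : (boost (Real.arsinh u / 2))ᵀ * G * boost (Real.arsinh u / 2) =
      !![c*p*c + c*q*s + (s*q*c + s*r*s), c*p*s + c*q*c + (s*q*s + s*r*c);
         s*p*c + s*q*s + (c*q*c + c*r*s), s*p*s + s*q*c + (c*q*s + c*r*c)] := by
    rw [hbt, hb, hGexp, Matrix.mul_fin_two, Matrix.mul_fin_two]
    ring_nf
  have hJ : (boost (Real.arsinh u / 2))ᵀ * Jmat * boost (Real.arsinh u / 2) = Jmat := by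
    rw [hbt, hb, Jmat, Matrix.mul_fin_two, Matrix.mul_fin_two]
    ext i j
    fin_cases i <;> fin_cases j <;> simp <;> (first | ring1 | linear_combination hcs | linear_combination -hcs)
  refine ⟨hJ, ?_, ?_⟩
  · rw [hprod]
    show (c*p*c + c*q*s + (s*q*c + s*r*s)) + (s*p*s + s*q*c + (c*q*s + c*r*c)) = 0
    linear_combination hkey
  · refine ⟨c*p*c + c*q*s + (s*q*c + s*r*s), c*p*s + c*q*c + (s*q*s + s*r*c), ?_, ?_⟩
    · intro hb0
      have hmul : (c*p*s + c*q*c + (s*q*s + s*r*c)) * (4*q)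
          = (c^2 + s^2) * ((2*q)^2 - (p+r)^2) := by
        linear_combination (p+r) * hkey
      rw [hb0, zero_mul] at hmul
      have hcs2 : (0:ℝ) < c^2 + s^2 := by nlinarith [hcs, sq_nonneg s]
      have hpos : (0:ℝ) < (c^2 + s^2) * ((2*q)^2 - (p+r)^2) :=
        mul_pos hcs2 (by linarith)
      linarith
    · rw [hprod]
      ext i j
      fin_cases i <;> fin_cases j <;> simp <;> (first | ring1 | linear_combination hkey)
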